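/- Let C ⊆ F_{q^m}^n be a linear code with d_SR(C) ≥ 3 and redundancy r = n − dim(C), for a sum-rank length partition n = n_1 + ... + n_ℓ. Then n ≤ ⌊ℓmr/2⌋; equivalently, the average sublength satisfies (Σ_i n_i)/ℓ ≤ mr/2. -/

import Mathlib

open Matrix Finset

noncomputable def rkWt {K L : Type*} [Field K] [Field L] [Algebra K L] {m : ℕ}
    (B : Module.Basis (Fin m) K L) {p : ℕ} (v : Fin p → L) : ℕ :=
  (Matrix.of (fun a (j : Fin p) => B.repr (v j) a) : Matrix (Fin m) (Fin p) K).rank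

noncomputable def srWt {K L : Type*} [Field K] [Field L] [Algebra K L] {m ℓ : ℕ}
    (B : Module.Basis (Fin m) K L) {n : Fin ℓ → ℕ} (c : ∀ i, Fin (n i) → L) : ℕ :=
  ∑ i, rkWt B (c i)

lemma matrixRank_le_rows {K : Type*} [Field K] {m p : ℕ}
    (M : Matrix (Fin m) (Fin p) K) (D : Finset (Fin m))
    (h : ∀ a ∉ D, ∀ j, M a j = 0) : M.rank ≤ D.card := by
  set t := D.card with ht
  let e := D.orderIsoOfFin rfl
  let E : Fin t → Fin m := fun b => (e b : Fin m)
  let Q : Matrix (Fin m) (Fin t) K := Matrix.of fun a b => if E b = a then (1 : K) else 0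
  let M' : Matrix (Fin t) (Fin p) K := M.submatrix E id
  have hM : M = Q * M' := by
    ext a j
    rw [Matrix.mul_apply]
    simp only [Q, M', Matrix.of_apply, Matrix.submatrix_apply, id_eq, ite_mul, one_mul, zero_mul]
    by_cases ha : a ∈ D
    · rw [Finset.sum_eq_single (e.symm ⟨a, ha⟩)]
      · simp [E]
      · intro b _ hb
        rw [if_neg]
        intro hEb
        apply hb
        have : e b = ⟨a, ha⟩ := Subtype.ext hEb
        rw [← this, OrderIso.symm_apply_apply]
      · simp
    · rw [h a ha j, Finset.sum_eq_zero]
      intro b _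
      rw [if_neg]
      intro hEb
      exact ha (hEb ▸ (e b).2)
  calc M.rank = (Q * M').rank := by rw [← hM]
    _ ≤ M'.rank := Matrix.rank_mul_le_right Q M'
    _ ≤ t := M'.rank_le_height

lemma rkWt_le_rows {K L : Type*} [Field K] [Field L] [Algebra K L] {m : ℕ}
    (B : Module.Basis (Fin m) K L) {p : ℕ} (v : Fin p → L) (D : Finset (Fin m))
    (h : ∀ a ∉ D, ∀ j, B.repr (v j) a = 0) : rkWt B v ≤ D.card :=
  matrixRank_le_rows _ D h

lemma rkWt_le_m {K L : Type*} [Field K] [Field L] [Algebra K L] {m : ℕ}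
    (B : Module.Basis (Fin m) K L) {p : ℕ} (v : Fin p → L) : rkWt B v ≤ m := by
  have := rkWt_le_rows B v Finset.univ (by simp)
  simpa using this

lemma key_count {K L : Type*} [Field K] [Fintype K] [Field L] [Fintype L]
    [Algebra K L] {m ℓ : ℕ} (B : Module.Basis (Fin m) K L) {n : Fin ℓ → ℕ}
    (C : Submodule L (∀ i, Fin (n i) → L))
    (hd : ∀ c ∈ C, c ≠ 0 → 3 ≤ srWt B c)
    (D : Fin ℓ → Finset (Fin m)) (hD : ∑ i, (D i).card ≤ 2) :
    m * Module.finrank L C + ∑ i, n i * (D i).card ≤ m * ∑ i, n i := by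
  classical
  -- the injection
  set f : C → (∀ i : Fin ℓ, Fin (n i) → {a : Fin m // a ∉ D i} → K) :=
    fun c i j a => B.repr (c.1 i j) a.1 with hf
  have hinj : Function.Injective f := by
    intro c₁ c₂ hcc
    by_contra hne
    have hsub : (c₁ : ∀ i, Fin (n i) → L) - (c₂ : ∀ i, Fin (n i) → L) ∈ C := sub_mem c₁.2 c₂.2
    have hne' : (c₁ : ∀ i, Fin (n i) → L) - (c₂ : ∀ i, Fin (n i) → L) ≠ 0 := by
      intro h0
      exact hne (Subtype.ext (sub_eq_zero.mp h0))
    have h3 := hd _ hsub hne'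
    have hle : srWt B ((c₁ : ∀ i, Fin (n i) → L) - (c₂ : ∀ i, Fin (n i) → L)) ≤ 2 := by
      refine le_trans (Finset.sum_le_sum (fun i _ => ?_)) hD
      refine rkWt_le_rows B _ (D i) (fun a ha j => ?_)
      have := congrFun (congrFun (congrFun hcc i) j) ⟨a, ha⟩
      simp only [hf] at this
      simp [Pi.sub_apply, map_sub, Finsupp.sub_apply, this]
    omega
  haveI : Fintype C := Fintype.ofFinite C
  have hcard := Fintype.card_le_of_injective f hinj
  -- cardinality computations
  have hL : Fintype.card L = Fintype.card K ^ m := by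
    rw [Module.card_fintype B, Fintype.card_fin]
  have hCcard : Fintype.card C = Fintype.card K ^ (m * Module.finrank L C) := by
    rw [Module.card_eq_pow_finrank (K := L) (V := C), hL, ← pow_mul]
  have hTcard : Fintype.card (∀ i : Fin ℓ, Fin (n i) → {a : Fin m // a ∉ D i} → K)
      = Fintype.card K ^ (∑ i, (m - (D i).card) * n i) := by
    rw [Fintype.card_pi, ← Finset.prod_pow_eq_pow_sum]
    refine Finset.prod_congr rfl (fun i _ => ?_)
    have hsc : Fintype.card {a : Fin m // a ∉ D i} = m - (D i).card := by
      simp [Fintype.card_subtype_compl]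
    rw [Fintype.card_fun, Fintype.card_fun, Fintype.card_fin, hsc, ← pow_mul]
  rw [hCcard, hTcard] at hcard
  have hq : 1 < Fintype.card K := Fintype.one_lt_card
  have hexp : m * Module.finrank L C ≤ ∑ i, (m - (D i).card) * n i :=
    (Nat.pow_le_pow_iff_right hq).mp hcard
  have hsplit : ∑ i, (m - (D i).card) * n i + ∑ i, n i * (D i).card = m * ∑ i, n i := by
    rw [← Finset.sum_add_distrib, Finset.mul_sum]
    refine Finset.sum_congr rfl (fun i _ => ?_)
    have hdm : (D i).card ≤ m := by
      have := Finset.card_le_univ (D i)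
      simpa using this
    have : (m - (D i).card) * n i + n i * (D i).card = ((m - (D i).card) + (D i).card) * n i := by
      ring
    rw [this, Nat.sub_add_cancel hdm, mul_comm]
  omega

/-- if `C ⊆ F_{q^m}^n` is a (nonzero) linear code with `d_SR(C) ≥ 3` and
redundancy `r = n − dim C` for the partition `n = n_1 + ⋯ + n_ℓ`, then `n ≤ ⌊ℓmr/2⌋`,
i.e. `2n ≤ ℓmr`; equivalently the average sublength is at most `mr/2`. -/
theorem length_le_half_ell_m_r {K L : Type*} [Field K] [Fintype K] [Field L] [Fintype L]
    [Algebra K L] {m ℓ : ℕ} (B : Module.Basis (Fin m) K L) {n : Fin ℓ → ℕ}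
    (hn : ∀ i, 0 < n i)
    (C : Submodule L (∀ i, Fin (n i) → L)) (hC : C ≠ ⊥) (r : ℕ)
    (hr : Module.finrank L C + r = ∑ i, n i)
    (hd : ∀ c ∈ C, c ≠ 0 → 3 ≤ srWt B c) :
    2 * ∑ i, n i ≤ ℓ * m * r := by
  classical
  set k := Module.finrank L C with hk
  set N := ∑ i, n i with hN
  -- a nonzero codeword gives 3 ≤ ℓ * m
  obtain ⟨c, hcC, hc0⟩ := (Submodule.ne_bot_iff C).mp hC
  have hlm : 3 ≤ ℓ * m := by
    have h3 := hd c hcC hc0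
    have hle : srWt B c ≤ ℓ * m := by
      calc srWt B c ≤ ∑ _i : Fin ℓ, m := Finset.sum_le_sum (fun i _ => rkWt_le_m B (c i))
        _ = ℓ * m := by rw [Finset.sum_const, Finset.card_univ, Fintype.card_fin, smul_eq_mul]
    omega
  have hl1 : 0 < ℓ := by
    rcases Nat.eq_zero_or_pos ℓ with h | h
    · rw [h] at hlm; omega
    · exact h
  haveI : Nonempty (Fin ℓ) := ⟨⟨0, hl1⟩⟩
  obtain ⟨i0, -, hi0⟩ := Finset.exists_max_image Finset.univ n Finset.univ_nonempty
  have hmrN : m * k + m * r = m * N := by rw [← hr]; ring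
  by_cases hm2 : 2 ≤ m
  · -- delete two rows of block i0
    set a0 : Fin m := ⟨0, by omega⟩
    set a1 : Fin m := ⟨1, by omega⟩
    have ha01 : a0 ≠ a1 := by simp [a0, a1, Fin.ext_iff]
    set D : Fin ℓ → Finset (Fin m) := fun i => if i = i0 then {a0, a1} else ∅ with hDdef
    have hcardD : ∀ i, (D i).card = if i = i0 then 2 else 0 := by
      intro i
      by_cases h : i = i0 <;> simp [hDdef, h, Finset.card_insert_of_notMem, ha01]
    have hsum : ∑ i, (D i).card ≤ 2 := by
      rw [Finset.sum_congr rfl (fun i _ => hcardD i), Finset.sum_ite_eq' Finset.univ i0]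
      simp
    have hkey := key_count B C hd D hsum
    have hnD : ∑ i, n i * (D i).card = n i0 * 2 := by
      have : ∀ i ∈ Finset.univ, n i * (D i).card = if i = i0 then n i * 2 else 0 := by
        intro i _
        rw [hcardD i]
        by_cases h : i = i0 <;> simp [h]
      rw [Finset.sum_congr rfl this, Finset.sum_ite_eq' Finset.univ i0]
      simp
    rw [hnD, ← hk, ← hN] at hkey
    have h2n : n i0 * 2 ≤ m * r := by omega
    have hNl : 2 * N ≤ ℓ * (n i0 * 2) := by
      calc 2 * N = ∑ i, 2 * n i := by rw [hN, Finset.mul_sum]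
        _ ≤ ∑ _i : Fin ℓ, 2 * n i0 := Finset.sum_le_sum
            (fun i _ => Nat.mul_le_mul_left 2 (hi0 i (Finset.mem_univ i)))
        _ = ℓ * (n i0 * 2) := by
            rw [Finset.sum_const, Finset.card_univ, Fintype.card_fin, smul_eq_mul]; ring
    calc 2 * N ≤ ℓ * (n i0 * 2) := hNl
      _ ≤ ℓ * (m * r) := Nat.mul_le_mul_left ℓ h2n
      _ = ℓ * m * r := by ring
  · -- m = 1, ℓ ≥ 3 : delete the two largest blocks
    have hm0 : m ≠ 0 := by rintro rfl; rw [mul_zero] at hlm; omega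
    have hm1 : m = 1 := by omega
    have hl3 : 3 ≤ ℓ := by rw [hm1, mul_one] at hlm; exact hlm
    have hne : (Finset.univ.erase i0).Nonempty := by
      rw [← Finset.card_pos, Finset.card_erase_of_mem (Finset.mem_univ i0),
        Finset.card_univ, Fintype.card_fin]
      omega
    obtain ⟨i1, hi1mem, hi1⟩ := Finset.exists_max_image (Finset.univ.erase i0) n hne
    have hne01 : i1 ≠ i0 := Finset.ne_of_mem_erase hi1mem
    set z : Fin m := ⟨0, by omega⟩
    set D : Fin ℓ → Finset (Fin m) := fun i => if i = i0 ∨ i = i1 then {z} else ∅ with hDdef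
    have hcardD : ∀ i, (D i).card = if i = i0 ∨ i = i1 then 1 else 0 := by
      intro i
      by_cases h : i = i0 ∨ i = i1 <;> simp [hDdef, h]
    have hsum2 : ∑ i, (D i).card = 2 := by
      rw [Finset.sum_congr rfl (fun i _ => hcardD i), Finset.sum_boole]
      have : Finset.univ.filter (fun i => i = i0 ∨ i = i1) = {i0, i1} := by
        ext i; simp [Finset.mem_insert]
      rw [this, Finset.card_insert_of_notMem (by simpa using hne01.symm)]
      simp
    have hkey := key_count B C hd D (le_of_eq hsum2)
    have hnD : ∑ i, n i * (D i).card = n i0 + n i1 := by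
      have h1 : ∀ i ∈ Finset.univ, n i * (D i).card
          = if i = i0 ∨ i = i1 then n i else 0 := by
        intro i _
        rw [hcardD i]
        by_cases h : i = i0 ∨ i = i1 <;> simp [h]
      rw [Finset.sum_congr rfl h1, ← Finset.sum_filter]
      have : Finset.univ.filter (fun i => i = i0 ∨ i = i1) = {i0, i1} := by
        ext i; simp [Finset.mem_insert]
      rw [this, Finset.sum_pair (Ne.symm hne01)]
    rw [hnD, ← hk, ← hN] at hkey
    have hrr : n i0 + n i1 ≤ m * r := by omega
    -- 2N ≤ ℓ (n i0 + n i1)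
    have hNsplit : N = n i0 + ∑ i ∈ Finset.univ.erase i0, n i := by
      rw [hN, ← Finset.add_sum_erase Finset.univ n (Finset.mem_univ i0)]
    have herase : ∑ i ∈ Finset.univ.erase i0, n i ≤ (ℓ - 1) * n i1 := by
      calc ∑ i ∈ Finset.univ.erase i0, n i ≤ ∑ _i ∈ Finset.univ.erase i0, n i1 :=
            Finset.sum_le_sum (fun i hi => hi1 i hi)
        _ = (ℓ - 1) * n i1 := by
            rw [Finset.sum_const, smul_eq_mul, Finset.card_erase_of_mem (Finset.mem_univ i0),
              Finset.card_univ, Fintype.card_fin]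
    have hi1le : n i1 ≤ n i0 := hi0 i1 (Finset.mem_univ i1)
    have h2N : 2 * N ≤ ℓ * (n i0 + n i1) := by
      have h1 : 2 * N ≤ 2 * n i0 + 2 * ((ℓ - 1) * n i1) := by omega
      have h2 : (ℓ - 2) * n i1 ≤ (ℓ - 2) * n i0 := Nat.mul_le_mul_left _ hi1le
      have h3 : 2 * ((ℓ - 1) * n i1) = ℓ * n i1 + (ℓ - 2) * n i1 := by
        have : 2 * (ℓ - 1) = ℓ + (ℓ - 2) := by omega
        rw [← mul_assoc, this]; ring
      have h4 : 2 * n i0 + (ℓ - 2) * n i0 = ℓ * n i0 := by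
        have : 2 + (ℓ - 2) = ℓ := by omega
        rw [← add_mul, this]
      calc 2 * N ≤ 2 * n i0 + (ℓ * n i1 + (ℓ - 2) * n i1) := by omega
        _ ≤ 2 * n i0 + (ℓ * n i1 + (ℓ - 2) * n i0) := by omega
        _ = ℓ * n i0 + ℓ * n i1 := by omega
        _ = ℓ * (n i0 + n i1) := by ring
    calc 2 * N ≤ ℓ * (n i0 + n i1) := h2N
      _ ≤ ℓ * (m * r) := Nat.mul_le_mul_left ℓ hrr
      _ = ℓ * m * r := by ring
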